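/- Let T be an essentially bounded random variable whose law is atomless. Define g : (0,1) → ℝ by g(γ) = sup_{α∈ℝ} (α − γ⁻¹ E[max(α − T, 0)]). Then g is continuous and strictly increasing on (0,1), lim_{γ→0⁺} g(γ) = essInf T, and lim_{γ→1⁻} g(γ) = E[T]. In particular the range of g on (0,1) is the open interval (essInf T, E[T]). -/

import Mathlib

open MeasureTheory Filter Set


theorem cvar_core (φ : ℝ → ℝ) (m M ET : ℝ) (hmM : m ≤ M)
    (hcont : Continuous φ) (hmono : Monotone φ) (hnn : ∀ α, 0 ≤ φ α)
    (hm0 : φ m = 0) (hub : ∀ α, α - φ α ≤ ET) (hM : φ M = M - ET)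
    (hpos : ∀ α, m < α → 0 < φ α)
    (hsmall : ∀ ε > 0, ∃ α, m < α ∧ φ α ≤ ε * (α - m))
    (hbig : ∀ ε > 0, ∃ δ > 0, ∀ α, δ * (α - (m + ε)) ≤ φ α)
    (g : ℝ → ℝ) (hg : ∀ γ ∈ Set.Ioo (0:ℝ) 1, g γ = ⨆ α : ℝ, (α - γ⁻¹ * φ α)) :
    ContinuousOn g (Set.Ioo 0 1) ∧ StrictMonoOn g (Set.Ioo 0 1) ∧
    Tendsto g (nhdsWithin 0 (Set.Ioi 0)) (nhds m) ∧
    Tendsto g (nhdsWithin 1 (Set.Iio 1)) (nhds ET) ∧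
    g '' Set.Ioo 0 1 = Set.Ioo m ET := by
  set G : ℝ → ℝ := fun y => ⨆ α : ℝ, (α - y * φ α) with hG
  have hφle : ∀ α ≤ m, φ α = 0 := fun α hα => le_antisymm (hm0 ▸ hmono hα) (hnn α)
  have hETM : ET ≤ M := by nlinarith [hnn M, hM]
  have hmET : m ≤ ET := by have := hub m; rw [hm0] at this; linarith
  have key : ∀ y, 1 ≤ y → ∀ α, α - y * φ α ≤ ET := by
    intro y hy α
    rcases le_or_gt α ET with h | h
    · nlinarith [hnn α]
    · nlinarith [hub α, hnn α]
  have hbdd : ∀ y, 1 ≤ y → BddAbove (Set.range fun α => α - y * φ α) := by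
    intro y hy
    exact ⟨ET, by rintro _ ⟨α, rfl⟩; exact key y hy α⟩
  have hGle : ∀ y, 1 ≤ y → G y ≤ ET := fun y hy => ciSup_le (key y hy)
  have hGm : ∀ y, 1 ≤ y → m ≤ G y := by
    intro y hy
    have := le_ciSup (hbdd y hy) m
    simpa [hm0] using this
  have attain : ∀ y, 1 ≤ y → ∃ α₁ ∈ Set.Icc m M, G y = α₁ - y * φ α₁ := by
    intro y hy
    obtain ⟨α₁, hα₁, hmax⟩ := isCompact_Icc.exists_isMaxOn (Set.nonempty_Icc.2 hmM)
      ((continuous_id.sub (continuous_const.mul hcont)).continuousOn :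
        ContinuousOn (fun α : ℝ => α - y * φ α) (Set.Icc m M))
    rw [isMaxOn_iff] at hmax
    refine ⟨α₁, hα₁, le_antisymm (ciSup_le ?_) (le_ciSup (hbdd y hy) α₁)⟩
    intro α
    rcases le_or_gt α m with h | h
    · have h0 : φ α = 0 := hφle α h
      have h1 : m - y * φ m ≤ α₁ - y * φ α₁ := hmax m ⟨le_rfl, hmM⟩
      rw [hm0] at h1
      rw [h0]
      linarith
    rcases le_or_gt α M with h2 | h2
    · exact hmax α ⟨h.le, h2⟩
    · have h1 : M - y * φ M ≤ α₁ - y * φ α₁ := hmax M ⟨hmM, le_rfl⟩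
      have h3 := hub α
      have h4 : y * (α - ET) ≤ y * φ α := by nlinarith
      rw [hM] at h1
      nlinarith
  have hGgt : ∀ y, 1 < y → m < G y := by
    intro y hy
    have hy0 : (0:ℝ) < y := by linarith
    obtain ⟨α, hαm, hφ⟩ := hsmall (1/(2*y)) (by positivity)
    have h1 : m < α - y * φ α := by
      have h2 : y * φ α ≤ y * (1/(2*y) * (α - m)) :=
        mul_le_mul_of_nonneg_left hφ hy0.le
      have h3 : y * (1/(2*y) * (α - m)) = (α - m)/2 := by field_simp
      nlinarith
    exact h1.trans_le (le_ciSup (hbdd y hy.le) α)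
  have hstrict : ∀ y1 y2, 1 < y2 → y2 < y1 → G y1 < G y2 := by
    intro y1 y2 h2 h21
    obtain ⟨α₁, hα₁, hGy1⟩ := attain y1 (by linarith)
    have hα₁m : m < α₁ := by
      have h0 : m < G y1 := hGgt y1 (by linarith)
      have h1 : G y1 ≤ α₁ := by rw [hGy1]; nlinarith [hnn α₁]
      linarith
    have hφpos := hpos α₁ hα₁m
    have h3 : α₁ - y1 * φ α₁ < α₁ - y2 * φ α₁ := by nlinarith
    exact (hGy1 ▸ h3).trans_le (le_ciSup (hbdd y2 h2.le) α₁)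
  set K : ℝ := M - ET with hKdef
  have hK : 0 ≤ K := by linarith
  have hGlipest : ∀ y ∈ Set.Ici (1:ℝ), ∀ y' ∈ Set.Ici (1:ℝ), G y - G y' ≤ K * |y - y'| := by
    intro y hy y' hy'
    obtain ⟨α₁, hα₁, hGy⟩ := attain y hy
    have h1 : α₁ - y' * φ α₁ ≤ G y' := le_ciSup (hbdd y' hy') α₁
    have h2 : φ α₁ ≤ K := by have := hmono hα₁.2; rw [hM] at this; linarith
    have h3 : 0 ≤ φ α₁ := hnn α₁
    have h4 : y' - y ≤ |y - y'| := by
      rw [abs_sub_comm]; exact le_abs_self _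
    have h5 : (0:ℝ) ≤ |y - y'| := abs_nonneg _
    nlinarith
  have hGlip : LipschitzOnWith (Real.toNNReal K) G (Set.Ici 1) := by
    rw [lipschitzOnWith_iff_dist_le_mul]
    intro x hx y hy
    rw [Real.dist_eq, Real.dist_eq]
    have hcoe : ((Real.toNNReal K : NNReal) : ℝ) = K := Real.coe_toNNReal K hK
    rw [hcoe, abs_sub_le_iff]
    constructor
    · exact hGlipest x hx y hy
    · have := hGlipest y hy x hx
      rwa [abs_sub_comm] at this
  have hGcont : ContinuousOn G (Set.Ici 1) := hGlip.continuousOn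
  have hG1 : G 1 = ET := by
    refine le_antisymm (hGle 1 le_rfl) ?_
    have := le_ciSup (hbdd 1 le_rfl) M
    rw [hM] at this
    calc ET = M - 1 * (M - ET) := by ring
    _ ≤ G 1 := this
  have hGtop : Tendsto G atTop (nhds m) := by
    rw [Metric.tendsto_atTop]
    intro ε hε
    obtain ⟨δ, hδ, hb⟩ := hbig (ε/2) (by linarith)
    refine ⟨max 1 (1/δ), fun y hy => ?_⟩
    have hy1 : 1 ≤ y := le_trans (le_max_left _ _) hy
    have hyδ : 1 ≤ y * δ := by
      have h : 1/δ ≤ y := le_trans (le_max_right _ _) hy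
      rw [div_le_iff₀ hδ] at h; linarith
    have hup : G y ≤ m + ε/2 := by
      apply ciSup_le
      intro α
      rcases le_or_gt α (m + ε/2) with h | h
      · nlinarith [hnn α]
      · have h1 := hb α
        have h2 : y * (δ * (α - (m + ε/2))) ≤ y * φ α :=
          mul_le_mul_of_nonneg_left h1 (by linarith)
        nlinarith
    have hlow : m ≤ G y := hGm y hy1
    rw [Real.dist_eq, abs_lt]
    constructor <;> linarith
  have hinv : ∀ γ ∈ Set.Ioo (0:ℝ) 1, 1 < γ⁻¹ := fun γ h => one_lt_inv₀ h.1 |>.mpr h.2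
  have hgG : ∀ γ ∈ Set.Ioo (0:ℝ) 1, g γ = G γ⁻¹ := hg
  -- continuity
  have hc : ContinuousOn g (Set.Ioo 0 1) := by
    have h1 : ContinuousOn (fun γ : ℝ => G γ⁻¹) (Set.Ioo 0 1) := by
      apply hGcont.comp
      · intro x hx
        exact (continuousAt_inv₀ (ne_of_gt hx.1)).continuousWithinAt
      · intro γ hγ
        exact (hinv γ hγ).le
    exact h1.congr hgG
  refine ⟨hc, ?_, ?_, ?_, ?_⟩
  -- strict mono
  · intro γ1 h1 γ2 h2 h12
    rw [hgG _ h1, hgG _ h2]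
    exact hstrict γ1⁻¹ γ2⁻¹ (hinv γ2 h2) (inv_strictAnti₀ h1.1 h12)
  -- limit at 0
  · have hev : ∀ᶠ γ in nhdsWithin (0:ℝ) (Set.Ioi 0), g γ = G γ⁻¹ := by
      filter_upwards [Ioo_mem_nhdsGT_of_mem (Set.left_mem_Ico.2 one_pos)] with γ hγ
      exact hgG γ hγ
    have h2 : Tendsto (fun γ : ℝ => G γ⁻¹) (nhdsWithin 0 (Set.Ioi 0)) (nhds m) :=
      hGtop.comp tendsto_inv_nhdsGT_zero
    exact h2.congr' (hev.mono fun x h => h.symm)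
  -- limit at 1
  · have hIooMem : Set.Ioo (0:ℝ) 1 ∈ nhdsWithin (1:ℝ) (Set.Iio 1) :=
      Ioo_mem_nhdsLT_of_mem (Set.right_mem_Ioc.2 one_pos)
    have hinvt : Tendsto (fun γ : ℝ => γ⁻¹) (nhdsWithin 1 (Set.Iio 1)) (nhdsWithin 1 (Set.Ici 1)) := by
      rw [tendsto_nhdsWithin_iff]
      constructor
      · have h0 : Tendsto (fun γ : ℝ => γ⁻¹) (nhds 1) (nhds 1) := by
          have := (continuousAt_inv₀ (one_ne_zero (α := ℝ))).tendsto
          simpa using this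
        exact h0.mono_left nhdsWithin_le_nhds
      · filter_upwards [hIooMem] with γ hγ
        exact (hinv γ hγ).le
    have hGat1 : Tendsto G (nhdsWithin 1 (Set.Ici 1)) (nhds ET) := by
      have := (hGcont 1 Set.self_mem_Ici).tendsto
      rwa [hG1] at this
    have h2 := hGat1.comp hinvt
    refine h2.congr' ?_
    filter_upwards [hIooMem] with γ hγ
    exact (hgG γ hγ).symm
  -- image
  · apply Set.Subset.antisymm
    · rintro _ ⟨γ, hγ, rfl⟩
      constructor
      · rw [hgG _ hγ]; exact hGgt _ (hinv γ hγ)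
      · have hγ' : (γ+1)/2 ∈ Set.Ioo (0:ℝ) 1 := by
          constructor <;> [linarith [hγ.1]; linarith [hγ.2]]
        have h1 : g γ < g ((γ+1)/2) := by
          rw [hgG _ hγ, hgG _ hγ']
          exact hstrict γ⁻¹ (((γ+1)/2)⁻¹) (hinv _ hγ') (inv_strictAnti₀ hγ.1 (by linarith [hγ.2]))
        have h2 : g ((γ+1)/2) ≤ ET := by
          rw [hgG _ hγ']; exact hGle _ (hinv _ hγ').le
        linarith
    · intro y hy
      have hne : (nhdsWithin (0:ℝ) (Set.Ioi 0)).NeBot := by infer_instance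
      have htend0 : Tendsto g (nhdsWithin 0 (Set.Ioi 0)) (nhds m) := by
        have hev : ∀ᶠ γ in nhdsWithin (0:ℝ) (Set.Ioi 0), g γ = G γ⁻¹ := by
          filter_upwards [Ioo_mem_nhdsGT_of_mem (Set.left_mem_Ico.2 one_pos)] with γ hγ
          exact hgG γ hγ
        exact (hGtop.comp tendsto_inv_nhdsGT_zero).congr' (hev.mono fun x h => h.symm)
      have hev1 : ∀ᶠ γ in nhdsWithin (0:ℝ) (Set.Ioi 0), g γ < y :=
        htend0.eventually_lt_const hy.1
      have hev2 : ∀ᶠ γ in nhdsWithin (0:ℝ) (Set.Ioi 0), γ ∈ Set.Ioo (0:ℝ) 1 :=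
        Ioo_mem_nhdsGT_of_mem (Set.left_mem_Ico.2 one_pos)
      obtain ⟨γ1, hγ1y, hγ1⟩ := (hev1.and hev2).exists
      -- find γ2 with y < g γ2 : use G near 1
      have hne1 : (nhdsWithin (1:ℝ) (Set.Iio 1)).NeBot := by infer_instance
      have htend1 : Tendsto g (nhdsWithin 1 (Set.Iio 1)) (nhds ET) := by
        have hIooMem : Set.Ioo (0:ℝ) 1 ∈ nhdsWithin (1:ℝ) (Set.Iio 1) :=
          Ioo_mem_nhdsLT_of_mem (Set.right_mem_Ioc.2 one_pos)
        have hinvt : Tendsto (fun γ : ℝ => γ⁻¹) (nhdsWithin 1 (Set.Iio 1)) (nhdsWithin 1 (Set.Ici 1)) := by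
          rw [tendsto_nhdsWithin_iff]
          constructor
          · have h0 : Tendsto (fun γ : ℝ => γ⁻¹) (nhds 1) (nhds 1) := by
              have := (continuousAt_inv₀ (one_ne_zero (α := ℝ))).tendsto
              simpa using this
            exact h0.mono_left nhdsWithin_le_nhds
          · filter_upwards [hIooMem] with γ hγ
            exact (hinv γ hγ).le
        have hGat1 : Tendsto G (nhdsWithin 1 (Set.Ici 1)) (nhds ET) := by
          have := (hGcont 1 Set.self_mem_Ici).tendsto
          rwa [hG1] at this
        refine (hGat1.comp hinvt).congr' ?_
        filter_upwards [hIooMem] with γ hγ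
        exact (hgG γ hγ).symm
      have hev3 : ∀ᶠ γ in nhdsWithin (1:ℝ) (Set.Iio 1), y < g γ :=
        htend1.eventually_const_lt hy.2
      have hev4 : ∀ᶠ γ in nhdsWithin (1:ℝ) (Set.Iio 1), γ ∈ Set.Ioo (0:ℝ) 1 :=
        Ioo_mem_nhdsLT_of_mem (Set.right_mem_Ioc.2 one_pos)
      obtain ⟨γ2, hγ2y, hγ2⟩ := (hev3.and hev4).exists
      have hlt : γ1 < γ2 := by
        rcases lt_trichotomy γ1 γ2 with h | h | h
        · exact h
        · exfalso; rw [h] at hγ1y; linarith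
        · exfalso
          have : g γ2 < g γ1 := by
            rw [hgG _ hγ1, hgG _ hγ2]
            exact hstrict γ2⁻¹ γ1⁻¹ (hinv γ1 hγ1) (inv_strictAnti₀ hγ2.1 h)
          linarith
      have hsub : Set.Icc γ1 γ2 ⊆ Set.Ioo 0 1 := fun x hx =>
        ⟨lt_of_lt_of_le hγ1.1 hx.1, lt_of_le_of_lt hx.2 hγ2.2⟩
      have hivt := intermediate_value_Ioo hlt.le (hc.mono hsub)
      obtain ⟨x, hx, hxy⟩ := hivt ⟨hγ1y, hγ2y⟩
      exact ⟨x, hsub ⟨hx.1.le, hx.2.le⟩, hxy⟩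

/-- For an essentially bounded random variable `T` with atomless law, the function
`g(γ) = sup_α (α - γ⁻¹ E[(α - T)₊])` is continuous and strictly increasing on `(0,1)`, tends to
`essInf T` as `γ → 0⁺` and to `E[T]` as `γ → 1⁻`, and its range on `(0,1)` is the open interval
`(essInf T, E[T])`. -/
theorem stmt_2 {Ω : Type*} [MeasureSpace Ω] [IsProbabilityMeasure (volume : Measure Ω)]
    (T : Ω → ℝ) (hTmeas : Measurable T) (hTbdd : MemLp T ⊤ volume)
    (hatomless : ∀ x : ℝ, volume {ω | T ω = x} = 0)
    (g : ℝ → ℝ)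
    (hg : ∀ γ ∈ Set.Ioo (0 : ℝ) 1,
      g γ = ⨆ α : ℝ, (α - γ⁻¹ * ∫ ω, max (α - T ω) 0)) :
    ContinuousOn g (Set.Ioo 0 1) ∧
    StrictMonoOn g (Set.Ioo 0 1) ∧
    Filter.Tendsto g (nhdsWithin 0 (Set.Ioi 0)) (nhds (essInf T volume)) ∧
    Filter.Tendsto g (nhdsWithin 1 (Set.Iio 1)) (nhds (∫ ω, T ω)) ∧
    g '' Set.Ioo 0 1 = Set.Ioo (essInf T volume) (∫ ω, T ω) := by
  classical
  set φ : ℝ → ℝ := fun α => ∫ ω, max (α - T ω) 0 with hφdef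
  set m : ℝ := essInf T volume with hmdef
  set ET : ℝ := ∫ ω, T ω with hETdef
  -- a.e. bound
  have hsnorm : eLpNormEssSup T volume < ⊤ := by
    have := hTbdd.2
    rwa [eLpNorm_exponent_top] at this
  set C : ℝ := ((eLpNormEssSup T volume).toNNReal : ℝ) with hCdef
  have hC : ∀ᵐ ω, |T ω| ≤ C := by
    filter_upwards [ae_le_eLpNormEssSup (f := T) (μ := volume)] with ω h
    have h1 : (‖T ω‖₊ : ENNReal) ≤ eLpNormEssSup T volume := h
    rw [← ENNReal.coe_toNNReal hsnorm.ne] at h1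
    have h2 : ‖T ω‖₊ ≤ (eLpNormEssSup T volume).toNNReal := ENNReal.coe_le_coe.1 h1
    calc |T ω| = (‖T ω‖₊ : ℝ) := by simp [Real.norm_eq_abs]
    _ ≤ C := by exact_mod_cast h2
  set M : ℝ := max m C with hMdef
  have hbd_below : IsBoundedUnder (· ≥ ·) (ae volume) T := by
    refine ⟨-C, ?_⟩
    rw [eventually_map]
    filter_upwards [hC] with ω h
    exact (abs_le.1 h).1
  have hbd_above : IsBoundedUnder (· ≤ ·) (ae volume) T := by
    refine ⟨C, ?_⟩
    rw [eventually_map]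
    filter_upwards [hC] with ω h
    exact (abs_le.1 h).2
  have hTae_ge : ∀ᵐ ω, m ≤ T ω := ae_essInf_le hbd_below
  have hTae_leM : ∀ᵐ ω, T ω ≤ M := by
    filter_upwards [hC] with ω h
    exact le_trans (abs_le.1 h).2 (le_max_right _ _)
  have hmM : m ≤ M := le_max_left _ _
  have hTint : Integrable T volume := hTbdd.integrable le_top
  have hint : ∀ α : ℝ, Integrable (fun ω => max (α - T ω) 0) volume := by
    intro α
    have hb : Integrable (fun ω => |α| + |T ω|) volume :=
      (integrable_const |α|).add hTint.abs
    refine hb.mono' (((measurable_const.sub hTmeas).max measurable_const).aestronglyMeasurable) ?_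
    refine Eventually.of_forall fun ω => ?_
    rw [Real.norm_eq_abs]
    have h1 : |max (α - T ω) 0| ≤ |α - T ω| := by
      rcases le_or_gt (α - T ω) 0 with h | h
      · rw [max_eq_right h]; simpa using abs_nonneg _
      · rw [max_eq_left h.le]
    have h2 : |α - T ω| ≤ |α| + |T ω| := abs_sub _ _
    linarith
  have hmono : Monotone φ := by
    intro a b hab
    exact integral_mono (hint a) (hint b) fun ω =>
      max_le_max (sub_le_sub_right hab _) le_rfl
  have hnn : ∀ α, 0 ≤ φ α := fun α => integral_nonneg fun ω => le_max_right _ _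
  have hlip : LipschitzWith 1 φ := by
    apply LipschitzWith.of_dist_le_mul
    intro a b
    rw [Real.dist_eq, Real.dist_eq, NNReal.coe_one, one_mul]
    have h1 : φ a - φ b = ∫ ω, (max (a - T ω) 0 - max (b - T ω) 0) :=
      (integral_sub (hint a) (hint b)).symm
    rw [h1]
    calc |∫ ω, (max (a - T ω) 0 - max (b - T ω) 0)|
        ≤ ∫ ω, |max (a - T ω) 0 - max (b - T ω) 0| := by
          simpa [Real.norm_eq_abs] using
            norm_integral_le_integral_norm (fun ω => max (a - T ω) 0 - max (b - T ω) 0)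
      _ ≤ ∫ _ω, |a - b| := by
          apply integral_mono ((hint a).sub (hint b)).abs (integrable_const _)
          intro ω
          have h2 := abs_max_sub_max_le_abs (a - T ω) (b - T ω) 0
          simpa using h2
      _ = |a - b| := by simp [measure_univ]
  have hm0 : φ m = 0 := by
    apply integral_eq_zero_of_ae
    filter_upwards [hTae_ge] with ω h
    simp only [Pi.zero_apply]
    rw [max_eq_right (by linarith : m - T ω ≤ 0)]
  have hub : ∀ α, α - φ α ≤ ET := by
    intro α
    have h1 : ∫ ω, (α - max (α - T ω) 0) = α - φ α := by
      rw [integral_sub (integrable_const α) (hint α), integral_const]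
      simp [measure_univ]; rfl
    rw [← h1, hETdef]
    apply integral_mono ((integrable_const α).sub (hint α)) hTint
    intro ω
    simp only [Pi.sub_apply]
    rcases le_or_gt (T ω) α with h | h
    · rw [max_eq_left (by linarith)]; linarith
    · rw [max_eq_right (by linarith)]; linarith
  have hF : ∀ c, m < c → 0 < volume {ω | T ω ≤ c} := by
    intro c hc
    by_contra h
    push_neg at h
    have h0 : volume {ω | T ω ≤ c} = 0 := le_antisymm h zero_le
    have hae : ∀ᵐ ω, c ≤ T ω := by
      filter_upwards [measure_eq_zero_iff_ae_notMem.1 h0] with ω h2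
      exact (lt_of_not_ge h2).le
    have hne : (ae (volume : Measure Ω)).NeBot := ae_neBot.2 (IsProbabilityMeasure.ne_zero _)
    have h3 : c ≤ essInf T volume :=
      le_liminf_of_le (hbd_above.isCoboundedUnder_ge) hae
    rw [← hmdef] at h3
    linarith
  have hlow : ∀ α c : ℝ, (α - c) * (volume {ω | T ω ≤ c}).toReal ≤ φ α := by
    intro α c
    have hsm : MeasurableSet {ω | T ω ≤ c} := hTmeas measurableSet_Iic
    have h1 : ∫ ω, ({ω | T ω ≤ c}).indicator (fun _ => α - c) ω
        = (α - c) * (volume {ω | T ω ≤ c}).toReal := by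
      rw [integral_indicator_const _ hsm, smul_eq_mul, measureReal_def]; ring
    rw [← h1]
    apply integral_mono ((integrable_const (α - c)).indicator hsm) (hint α)
    intro ω
    by_cases hω : ω ∈ {ω | T ω ≤ c}
    · rw [Set.indicator_of_mem hω]
      have h2 : T ω ≤ c := hω
      calc α - c ≤ α - T ω := by linarith
        _ ≤ max (α - T ω) 0 := le_max_left _ _
    · rw [Set.indicator_of_notMem hω]; exact le_max_right _ _
  have hpos : ∀ α, m < α → 0 < φ α := by
    intro α hα
    have h1 := hlow α ((m + α)/2)
    have h2 : 0 < (volume {ω | T ω ≤ (m + α)/2}).toReal :=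
      ENNReal.toReal_pos (hF _ (by linarith)).ne' (measure_ne_top _ _)
    nlinarith
  have hupp : ∀ α, m ≤ α → φ α ≤ (α - m) * (volume {ω | T ω ≤ α}).toReal := by
    intro α hα
    have hsm : MeasurableSet {ω | T ω ≤ α} := hTmeas measurableSet_Iic
    have h1 : ∫ ω, ({ω | T ω ≤ α}).indicator (fun _ => α - m) ω
        = (α - m) * (volume {ω | T ω ≤ α}).toReal := by
      rw [integral_indicator_const _ hsm, smul_eq_mul, measureReal_def]; ring
    rw [← h1]
    apply integral_mono_ae (hint α) ((integrable_const (α - m)).indicator hsm)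
    filter_upwards [hTae_ge] with ω h
    by_cases hω : ω ∈ {ω | T ω ≤ α}
    · rw [Set.indicator_of_mem hω]
      have h2 : T ω ≤ α := hω
      rw [max_eq_left (by linarith)]
      linarith
    · rw [Set.indicator_of_notMem hω]
      have h2 : α < T ω := lt_of_not_ge hω
      rw [max_eq_right (by linarith)]
  have hbig : ∀ ε > 0, ∃ δ > 0, ∀ α, δ * (α - (m + ε)) ≤ φ α := by
    intro ε hε
    refine ⟨(volume {ω | T ω ≤ m + ε}).toReal,
      ENNReal.toReal_pos (hF _ (by linarith)).ne' (measure_ne_top _ _), fun α => ?_⟩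
    rw [mul_comm]
    exact hlow α (m + ε)
  have hsmall : ∀ ε > 0, ∃ α, m < α ∧ φ α ≤ ε * (α - m) := by
    intro ε hε
    have hm0' : volume {ω | T ω ≤ m} = 0 := by
      have h1 : {ω | T ω ≤ m} ⊆ {ω | T ω < m} ∪ {ω | T ω = m} := by
        intro ω h
        have h'' : T ω ≤ m := h
        rcases lt_or_eq_of_le h'' with h' | h'
        · exact Or.inl h'
        · exact Or.inr h'
      have h2 : volume {ω | T ω < m} = 0 := by
        have h3 := hTae_ge
        rw [ae_iff] at h3
        simpa [not_le] using h3
      refine measure_mono_null h1 (le_antisymm ?_ zero_le)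
      calc volume ({ω | T ω < m} ∪ {ω | T ω = m})
          ≤ volume {ω | T ω < m} + volume {ω | T ω = m} := measure_union_le _ _
        _ = 0 := by rw [h2, hatomless m]; simp
    set s : ℕ → Set Ω := fun n => {ω | T ω ≤ m + 1/(n+1)} with hsdef
    have hmeas : ∀ n, NullMeasurableSet (s n) volume := fun n =>
      (hTmeas measurableSet_Iic).nullMeasurableSet
    have hanti : Antitone s := by
      intro i j hij ω hω
      simp only [hsdef, Set.mem_setOf_eq] at *
      have h4 : 1/((j:ℝ)+1) ≤ 1/((i:ℝ)+1) := by
        apply one_div_le_one_div_of_le (by positivity)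
        have : (i:ℝ) ≤ (j:ℝ) := by exact_mod_cast hij
        linarith
      linarith
    have hiInter : ⋂ n, s n = {ω | T ω ≤ m} := by
      ext ω
      simp only [Set.mem_iInter, hsdef, Set.mem_setOf_eq]
      constructor
      · intro h
        by_contra hc
        push_neg at hc
        obtain ⟨n, hn⟩ := exists_nat_one_div_lt (sub_pos.2 hc)
        have := h n
        linarith
      · intro h n
        have h5 : 0 < 1/((n:ℝ)+1) := by positivity
        linarith
    have htend : Tendsto (fun n => volume (s n)) atTop (nhds 0) := by
      have := tendsto_measure_iInter_atTop hmeas hanti ⟨0, measure_ne_top _ _⟩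
      rw [hiInter, hm0'] at this
      exact this
    have hev : ∀ᶠ n in atTop, volume (s n) < ENNReal.ofReal ε :=
      htend.eventually_lt_const (ENNReal.ofReal_pos.2 hε)
    obtain ⟨n, hn⟩ := hev.exists
    have hpos' : (0:ℝ) < 1/((n:ℝ)+1) := by positivity
    refine ⟨m + 1/((n:ℝ)+1), by linarith, ?_⟩
    have h1 := hupp (m + 1/((n:ℝ)+1)) (by linarith)
    have h2 : (volume (s n)).toReal < ε :=
      (ENNReal.lt_ofReal_iff_toReal_lt (measure_ne_top _ _)).1 hn
    have h3 : {ω | T ω ≤ m + 1/((n:ℝ)+1)} = s n := rfl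
    rw [h3] at h1
    have h4 : m + 1/((n:ℝ)+1) - m = 1/((n:ℝ)+1) := by ring
    rw [h4] at h1 ⊢
    nlinarith [ENNReal.toReal_nonneg (a := volume (s n))]
  have hMeq : φ M = M - ET := by
    have h1 : ∀ᵐ ω, max (M - T ω) 0 = M - T ω := by
      filter_upwards [hTae_leM] with ω h
      exact max_eq_left (by linarith)
    have h2 : φ M = ∫ ω, (M - T ω) := integral_congr_ae h1
    rw [h2, integral_sub (integrable_const M) hTint, integral_const, ← hETdef]
    simp [measure_univ]
  exact cvar_core φ m M ET hmM hlip.continuous hmono hnn hm0 hub hMeq hpos hsmall hbig g hg
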